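/- Let P and Q be lattice polytopes in ℝ^n with L(P) = L(Q) = 1 and L(P+Q) = 2. If P contains at least two lattice segments (segments between lattice points of P) whose reduced direction vectors represent the same class in ℤ₃ℙ^{n−1}, then Q contains no lattice segment from that class. -/
import Mathlib


open Pointwise

/-- The real point corresponding to a lattice point. -/
def coeV {n : ℕ} (v : Fin n → ℤ) : Fin n → ℝ := fun i => (v i : ℝ)

/-- A vector in `ℤ^n` is primitive if the gcd of its coordinates is `1`. -/
def IsPrim {n : ℕ} (v : Fin n → ℤ) : Prop := Finset.univ.gcd v = 1

/-- The zonotope with base lattice point `A` obtained as the Minkowski sum of the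
lattice segments `[0, v i]`. -/
def Zono {n L : ℕ} (A : Fin n → ℤ) (v : Fin L → Fin n → ℤ) : Set (Fin n → ℝ) :=
  ({coeV A} : Set (Fin n → ℝ)) + ∑ i, segment ℝ 0 (coeV (v i))

/-- `P` contains (a translate of) a Minkowski sum of `L` primitive lattice segments. -/
def IsDecomp {n : ℕ} (P : Set (Fin n → ℝ)) (L : ℕ) : Prop :=
  ∃ (A : Fin n → ℤ) (v : Fin L → Fin n → ℤ), (∀ i, IsPrim (v i)) ∧ Zono A v ⊆ P

/-- `L` is the Minkowski length of `P`. -/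
def MinkLen {n : ℕ} (P : Set (Fin n → ℝ)) (L : ℕ) : Prop :=
  IsDecomp P L ∧ ∀ M, IsDecomp P M → M ≤ L

/-- `P` is a lattice polytope: the convex hull of a nonempty finite set of lattice points. -/
def IsLatticePolytope {n : ℕ} (P : Set (Fin n → ℝ)) : Prop :=
  ∃ S : Finset (Fin n → ℤ), S.Nonempty ∧ P = convexHull ℝ (coeV '' ↑S)

/-- `Zono A v` is a smallest maximal Minkowski decomposition in `P`: it realizes the
Minkowski length of `P` and is minimal with respect to inclusion among all maximal
decompositions in `P`. -/
def IsSmallestMax {n L : ℕ} (P : Set (Fin n → ℝ)) (A : Fin n → ℤ)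
    (v : Fin L → Fin n → ℤ) : Prop :=
  (∀ i, IsPrim (v i)) ∧ Zono A v ⊆ P ∧ MinkLen P L ∧
    ∀ (B : Fin n → ℤ) (w : Fin L → Fin n → ℤ), (∀ i, IsPrim (w i)) →
      Zono B w ⊆ P → Zono B w ⊆ Zono A v → Zono B w = Zono A v

/-- Two direction vectors represent the same class in `ℤ₃ℙ^{n-1}`:
they are congruent mod 3 up to sign. -/
def SameClass3 {n : ℕ} (d e : Fin n → ℤ) : Prop :=
  (∀ i, (d i - e i) % 3 = 0) ∨ (∀ i, (d i + e i) % 3 = 0)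


section Aux

lemma coeV_add' {n : ℕ} (x y : Fin n → ℤ) : coeV (x + y) = coeV x + coeV y := by
  funext i; simp [coeV]

lemma exists_prim' {n : ℕ} (v : Fin n → ℤ) (hv : v ≠ 0) :
    ∃ (m : ℤ) (p : Fin n → ℤ), 0 < m ∧ IsPrim p ∧ v = m • p := by
  set g := Finset.univ.gcd v with hg
  have hgne : g ≠ 0 := by
    intro h
    exact hv (funext fun i => Finset.gcd_eq_zero_iff.mp (hg ▸ h) i (Finset.mem_univ i))
  have hgnn : 0 ≤ g := by
    have h1 : normalize g = g := Finset.normalize_gcd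
    rw [← Int.abs_eq_normalize] at h1
    rw [← h1]; exact abs_nonneg g
  have hgpos : 0 < g := lt_of_le_of_ne hgnn (Ne.symm hgne)
  refine ⟨g, fun i => v i / g, hgpos, ?_, ?_⟩
  · have hveq : v = fun i => g * (v i / g) :=
      funext fun i => (Int.mul_ediv_cancel' (Finset.gcd_dvd (Finset.mem_univ i))).symm
    have key : g = g * Finset.univ.gcd (fun i => v i / g) := by
      conv_lhs => rw [hg, hveq]
      rw [Finset.gcd_mul_left, Int.normalize_of_nonneg hgnn]
    have : (1 : ℤ) = Finset.univ.gcd (fun i => v i / g) :=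
      mul_left_cancel₀ hgne (by rw [mul_one, ← key])
    exact this.symm
  · funext i
    simp only [Pi.smul_apply, smul_eq_mul]
    exact (Int.mul_ediv_cancel' (Finset.gcd_dvd (Finset.mem_univ i))).symm

lemma mem_seg' {n : ℕ} {X Y : Fin n → ℝ} (t : ℝ) (h0 : 0 ≤ t) (h1 : t ≤ 1) :
    X + t • (Y - X) ∈ segment ℝ X Y :=
  ⟨1 - t, t, by linarith, h0, by ring, by module⟩

lemma mod3_decomp' {n : ℕ} {R : Set (Fin n → ℝ)} (hR : Convex ℝ R)
    (z z' : Fin n → ℤ) (hne : z ≠ z') (h3 : ∀ i, (z' i - z i) % 3 = 0)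
    (h1 : coeV z ∈ R) (h2 : coeV z' ∈ R) : IsDecomp R 3 := by
  set d : Fin n → ℤ := fun i => (z' i - z i) / 3 with hd
  have hzd : ∀ i, z' i = z i + 3 * d i := fun i => by have := h3 i; simp only [hd]; omega
  have hdne : d ≠ 0 := by
    intro h
    apply hne; funext i
    have h0 := congrFun h i
    simp only [hd, Pi.zero_apply] at h0
    have := h3 i; omega
  obtain ⟨m, p, hm, hp, hmp⟩ := exists_prim' d hdne
  have hdp : ∀ i, d i = m * p i := fun i => by rw [hmp]; simp
  refine ⟨z, fun _ => p, fun _ => hp, ?_⟩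
  intro x hx
  rw [Zono, Fin.sum_univ_three] at hx
  obtain ⟨w0, hw0, w1, hw1, rfl⟩ := Set.mem_add.mp hx
  rw [Set.mem_singleton_iff] at hw0; subst hw0
  obtain ⟨w2, hw2, w3, hw3, rfl⟩ := Set.mem_add.mp hw1
  obtain ⟨w4, hw4, w5, hw5, rfl⟩ := Set.mem_add.mp hw2
  obtain ⟨a0, b0, ha0, hb0, hab0, rfl⟩ := hw4
  obtain ⟨a1, b1, ha1, hb1, hab1, rfl⟩ := hw5
  obtain ⟨a2, b2, ha2, hb2, hab2, rfl⟩ := hw3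
  have hmr : (0:ℝ) < (m:ℝ) := by exact_mod_cast hm
  have hm1 : (1:ℝ) ≤ (m:ℝ) := by exact_mod_cast hm
  set t : ℝ := (b0 + b1 + b2) / (3 * m) with ht
  have h0t : 0 ≤ t := by apply div_nonneg; linarith; linarith
  have h1t : t ≤ 1 := by
    rw [ht, div_le_one (by linarith)]; nlinarith
  have hkey : coeV z + ((a0 • 0 + b0 • coeV p + (a1 • 0 + b1 • coeV p)) + (a2 • 0 + b2 • coeV p))
      = coeV z + t • (coeV z' - coeV z) := by
    funext i
    simp only [coeV, Pi.add_apply, Pi.smul_apply, Pi.sub_apply, Pi.zero_apply, smul_eq_mul,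
      mul_zero, zero_add, ht]
    rw [hzd i, hdp i]
    push_cast
    field_simp
    ring
  rw [hkey]
  exact hR.segment_subset h1 h2 (mem_seg' t h0t h1t)

lemma para_decomp' {n : ℕ} {P : Set (Fin n → ℝ)} (hP : Convex ℝ P)
    (z u d : Fin n → ℤ) (hu : u ≠ 0) (hd : d ≠ 0)
    (h1 : coeV z ∈ P) (h2 : coeV (z + u) ∈ P) (h3 : coeV (z + d) ∈ P)
    (h4 : coeV (z + u + d) ∈ P) : IsDecomp P 2 := by
  obtain ⟨m, p, hm, hp, hmp⟩ := exists_prim' u hu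
  obtain ⟨k, q, hk, hq, hkq⟩ := exists_prim' d hd
  have hup : ∀ i, u i = m * p i := fun i => by rw [hmp]; simp
  have hdq : ∀ i, d i = k * q i := fun i => by rw [hkq]; simp
  refine ⟨z, ![p, q], ?_, ?_⟩
  · intro i; fin_cases i <;> simpa
  intro x hx
  rw [Zono, Fin.sum_univ_two] at hx
  simp only [Matrix.cons_val_zero, Matrix.cons_val_one, Matrix.head_cons] at hx
  obtain ⟨w0, hw0, w1, hw1, rfl⟩ := Set.mem_add.mp hx
  rw [Set.mem_singleton_iff] at hw0; subst hw0
  obtain ⟨w2, hw2, w3, hw3, rfl⟩ := Set.mem_add.mp hw1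
  obtain ⟨a0, b0, ha0, hb0, hab0, rfl⟩ := hw2
  obtain ⟨a1, b1, ha1, hb1, hab1, rfl⟩ := hw3
  have hmr : (1:ℝ) ≤ (m:ℝ) := by exact_mod_cast hm
  have hkr : (1:ℝ) ≤ (k:ℝ) := by exact_mod_cast hk
  set s : ℝ := b0 / m with hs
  set t : ℝ := b1 / k with htd
  have h0s : 0 ≤ s := div_nonneg hb0 (by linarith)
  have h1s : s ≤ 1 := by rw [hs, div_le_one (by linarith)]; linarith
  have h0t : 0 ≤ t := div_nonneg hb1 (by linarith)
  have h1t : t ≤ 1 := by rw [htd, div_le_one (by linarith)]; linarith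
  set W1 : Fin n → ℝ := coeV z + s • (coeV (z + u) - coeV z) with hW1
  set W2 : Fin n → ℝ := coeV (z + d) + s • (coeV (z + u + d) - coeV (z + d)) with hW2
  have hW1P : W1 ∈ P := hP.segment_subset h1 h2 (mem_seg' s h0s h1s)
  have hW2P : W2 ∈ P := hP.segment_subset h3 h4 (mem_seg' s h0s h1s)
  have hkey : coeV z + (a0 • 0 + b0 • coeV p + (a1 • 0 + b1 • coeV q))
      = W1 + t • (W2 - W1) := by
    funext i
    simp only [hW1, hW2, coeV, Pi.add_apply, Pi.smul_apply, Pi.sub_apply, Pi.zero_apply,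
      smul_eq_mul, mul_zero, zero_add, hs, htd]
    rw [hup i, hdq i]
    push_cast
    field_simp
    ring
  rw [hkey]
  exact hP.segment_subset hW1P hW2P (mem_seg' t h0t h1t)

end Aux

/-- If `L(P) = L(Q) = 1`, `L(P+Q) = 2`, and `P` contains two distinct lattice segments from
the same class of `ℤ₃ℙ^{n-1}`, then `Q` contains no lattice segment from that class. -/
theorem stmt11 {n : ℕ} (P Q : Set (Fin n → ℝ))
    (hP : IsLatticePolytope P) (hQ : IsLatticePolytope Q)
    (hLP : MinkLen P 1) (hLQ : MinkLen Q 1) (hPQ : MinkLen (P + Q) 2)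
    (x₁ y₁ x₂ y₂ : Fin n → ℤ)
    (hx₁ : coeV x₁ ∈ P) (hy₁ : coeV y₁ ∈ P) (hx₂ : coeV x₂ ∈ P) (hy₂ : coeV y₂ ∈ P)
    (hne₁ : x₁ ≠ y₁) (hne₂ : x₂ ≠ y₂)
    (hdistinct : ({x₁, y₁} : Set (Fin n → ℤ)) ≠ {x₂, y₂})
    (hnz3 : ¬ ∀ i, (3 : ℤ) ∣ (y₁ i - x₁ i))
    (hsame : SameClass3 (fun i => y₁ i - x₁ i) (fun i => y₂ i - x₂ i)) :
    ∀ a b : Fin n → ℤ, coeV a ∈ Q → coeV b ∈ Q → a ≠ b →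
      ¬ SameClass3 (fun i => y₁ i - x₁ i) (fun i => b i - a i) := by
  intro a b ha hb hab hclass
  obtain ⟨SP, hSPne, hPdef⟩ := hP
  obtain ⟨SQ, hSQne, hQdef⟩ := hQ
  have hPc : Convex ℝ P := by rw [hPdef]; exact convex_convexHull ℝ _
  have hQc : Convex ℝ Q := by rw [hQdef]; exact convex_convexHull ℝ _
  have hPQc : Convex ℝ (P + Q) := hPc.add hQc
  -- Any segment in `P` same-class with `[a,b]` whose direction is not exactly `±(b-a)`
  -- yields a lattice segment of length 3 in `P+Q`, contradicting `L(P+Q) = 2`.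
  have key : ∀ x y : Fin n → ℤ, coeV x ∈ P → coeV y ∈ P →
      SameClass3 (fun i => y i - x i) (fun i => b i - a i) →
      (¬ ∀ i, y i - x i = b i - a i) → (¬ ∀ i, y i - x i = a i - b i) → False := by
    intro x y hx hy hs hne1 hne2
    have hmem : ∀ (u v : Fin n → ℤ), coeV u ∈ P → coeV v ∈ Q → coeV (u + v) ∈ P + Q := by
      intro u v hu hv; rw [coeV_add']; exact Set.add_mem_add hu hv
    have hdec : IsDecomp (P + Q) 3 := by
      rcases hs with h | h
      · refine mod3_decomp' hPQc (x + b) (y + a) ?_ ?_ (hmem x b hx hb) (hmem y a hy ha)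
        · intro he
          apply hne1
          intro i
          have := congrFun he i
          simp only [Pi.add_apply] at this
          omega
        · intro i
          have := h i
          simp only at this
          simp only [Pi.add_apply]
          omega
      · refine mod3_decomp' hPQc (x + a) (y + b) ?_ ?_ (hmem x a hx ha) (hmem y b hy hb)
        · intro he
          apply hne2
          intro i
          have := congrFun he i
          simp only [Pi.add_apply] at this
          omega
        · intro i
          have := h i
          simp only at this
          simp only [Pi.add_apply]
          omega
    have := hPQ.2 3 hdec
    omega
  -- Step 1: the first segment must have direction exactly `±(b - a)`.
  have hu1 : (∀ i, y₁ i - x₁ i = b i - a i) ∨ (∀ i, y₁ i - x₁ i = a i - b i) := by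
    by_contra h
    rw [not_or] at h
    exact key x₁ y₁ hx₁ hy₁ hclass h.1 h.2
  -- The second segment is also same-class with `[a,b]`.
  have hclass2 : SameClass3 (fun i => y₂ i - x₂ i) (fun i => b i - a i) := by
    rcases hsame with h | h <;> rcases hclass with h' | h'
    · left; intro i; have h1 := h i; have h2 := h' i; simp only at h1 h2 ⊢; omega
    · right; intro i; have h1 := h i; have h2 := h' i; simp only at h1 h2 ⊢; omega
    · right; intro i; have h1 := h i; have h2 := h' i; simp only at h1 h2 ⊢; omega
    · left; intro i; have h1 := h i; have h2 := h' i; simp only at h1 h2 ⊢; omega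
  have hu2 : (∀ i, y₂ i - x₂ i = b i - a i) ∨ (∀ i, y₂ i - x₂ i = a i - b i) := by
    by_contra h
    rw [not_or] at h
    exact key x₂ y₂ hx₂ hy₂ hclass2 h.1 h.2
  -- Hence the two segments in `P` are (anti)parallel translates of one another.
  have hcase : (∀ i, y₂ i - x₂ i = y₁ i - x₁ i) ∨ (∀ i, y₂ i - x₂ i = -(y₁ i - x₁ i)) := by
    rcases hu1 with h | h <;> rcases hu2 with h' | h'
    · left; intro i; have := h i; have := h' i; omega
    · right; intro i; have := h i; have := h' i; omega
    · right; intro i; have := h i; have := h' i; omega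
    · left; intro i; have := h i; have := h' i; omega
  have hu1ne : (fun i => y₁ i - x₁ i) ≠ (0 : Fin n → ℤ) := by
    intro h
    apply hnz3
    intro i
    have := congrFun h i
    simp only [Pi.zero_apply] at this
    omega
  -- They then span a parallelogram in `P`, contradicting `L(P) = 1`.
  have hdecP : IsDecomp P 2 := by
    rcases hcase with hc | hc
    · have hx12 : x₁ ≠ x₂ := by
        intro he
        apply hdistinct
        have hy12 : y₁ = y₂ := by
          funext i; have := hc i; have := congrFun he i; omega
        rw [he, hy12]
      refine para_decomp' hPc x₁ (fun i => y₁ i - x₁ i) (fun i => x₂ i - x₁ i)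
        hu1ne ?_ ?_ ?_ ?_ ?_
      · intro h
        apply hx12
        funext i
        have := congrFun h i
        simp only [Pi.zero_apply] at this
        omega
      · exact hx₁
      · have : x₁ + (fun i => y₁ i - x₁ i) = y₁ := by
          funext i; simp only [Pi.add_apply]; omega
        rw [this]; exact hy₁
      · have : x₁ + (fun i => x₂ i - x₁ i) = x₂ := by
          funext i; simp only [Pi.add_apply]; omega
        rw [this]; exact hx₂
      · have : x₁ + (fun i => y₁ i - x₁ i) + (fun i => x₂ i - x₁ i) = y₂ := by
          funext i; simp only [Pi.add_apply]; have := hc i; omega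
        rw [this]; exact hy₂
    · have hx1y2 : x₁ ≠ y₂ := by
        intro he
        apply hdistinct
        have hx2y1 : x₂ = y₁ := by
          funext i; have := hc i; have := congrFun he i; omega
        rw [hx2y1, ← he, Set.pair_comm]
      refine para_decomp' hPc x₁ (fun i => y₁ i - x₁ i) (fun i => y₂ i - x₁ i)
        hu1ne ?_ ?_ ?_ ?_ ?_
      · intro h
        apply hx1y2
        funext i
        have := congrFun h i
        simp only [Pi.zero_apply] at this
        omega
      · exact hx₁
      · have : x₁ + (fun i => y₁ i - x₁ i) = y₁ := by
          funext i; simp only [Pi.add_apply]; omega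
        rw [this]; exact hy₁
      · have : x₁ + (fun i => y₂ i - x₁ i) = y₂ := by
          funext i; simp only [Pi.add_apply]; omega
        rw [this]; exact hy₂
      · have : x₁ + (fun i => y₁ i - x₁ i) + (fun i => y₂ i - x₁ i) = x₂ := by
          funext i; simp only [Pi.add_apply]; have := hc i; omega
        rw [this]; exact hx₂
  have := hLP.2 2 hdecP
  omega
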